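/- In the extended restriction diagram on twisted-Frobenius fixed points, whose rows are (E_𝐕^𝐅 ← S_𝐖^𝐅 → E_𝐓^𝐅 × E_𝐖^𝐅), (E_𝐕^{♥,𝐅} ← S_𝐖^{♥,𝐅} → E_𝐓^{♥,𝐅} × E_𝐖^{♥,𝐅}) and (E_𝐕̂^{𝐅̂} ← S_𝐖̂^{𝐅̂} → E_𝐓̂^{𝐅̂} × E_𝐖̂^{𝐅̂}), with upward vertical maps the inclusions j and downward vertical maps the contraction maps μ, all four squares commute; moreover the two top squares are Cartesian squares of sets: S_𝐖^{♥,𝐅} is the fiber product of S_𝐖^𝐅 and E_𝐕^{♥,𝐅} over E_𝐕^𝐅, and S_𝐖^{♥,𝐅} is the fiber product of S_𝐖^𝐅 and E_𝐓^{♥,𝐅} × E_𝐖^{♥,𝐅} over E_𝐓^𝐅 × E_𝐖^𝐅. -/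

import Mathlib

noncomputable section

/-- `x` and `y` lie in one orbit of the permutation `a`. -/
def inOrbit {α : Type*} (a : Equiv.Perm α) (x y : α) : Prop := ∃ n : ℤ, (a ^ n) x = y

lemma inOrbit_refl {α : Type*} (a : Equiv.Perm α) (x : α) : inOrbit a x x :=
  ⟨0, by simp⟩

lemma inOrbit_apply {α : Type*} (a : Equiv.Perm α) (x y : α) :
    inOrbit a x (a y) ↔ inOrbit a x y := by
  constructor
  · rintro ⟨n, h⟩
    refine ⟨-1 + n, ?_⟩
    have hh : (a ^ (-1 + n : ℤ)) x = a⁻¹ ((a ^ n) x) := by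
      rw [zpow_add, Equiv.Perm.mul_apply, zpow_neg_one]
    rw [hh, h, ← Equiv.Perm.mul_apply, inv_mul_cancel, Equiv.Perm.one_apply]
  · rintro ⟨n, h⟩
    refine ⟨1 + n, ?_⟩
    rw [zpow_add, Equiv.Perm.mul_apply, h, zpow_one]

lemma inOrbit_symm {α : Type*} {a : Equiv.Perm α} {x y : α} (h : inOrbit a x y) :
    inOrbit a y x := by
  obtain ⟨n, h⟩ := h
  refine ⟨-n, ?_⟩
  rw [← h, ← Equiv.Perm.mul_apply, ← zpow_add, neg_add_cancel, zpow_zero,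
    Equiv.Perm.one_apply]

lemma inOrbit_trans {α : Type*} {a : Equiv.Perm α} {x y z : α}
    (h1 : inOrbit a x y) (h2 : inOrbit a y z) : inOrbit a x z := by
  obtain ⟨n, h1⟩ := h1; obtain ⟨m, h2⟩ := h2
  exact ⟨m + n, by rw [zpow_add, Equiv.Perm.mul_apply, h1, h2]⟩

/-- A finite oriented graph (loops allowed) together with a pair of bijections commuting
with the source and target maps (an automorphism of the oriented graph). -/
structure PreGraph where
  V : Type
  E : Type
  [fv : Fintype V]
  [fe : Fintype E]
  nonemptyV : Nonempty V
  src : E → V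
  tgt : E → V
  aV : Equiv.Perm V
  aE : Equiv.Perm E
  comm_src : ∀ h, src (aE h) = aV (src h)
  comm_tgt : ∀ h, tgt (aE h) = aV (tgt h)

attribute [instance] PreGraph.fv PreGraph.fe

namespace PreGraph

variable (Q : PreGraph)

lemma comm_src_inv (h : Q.E) : Q.src (Q.aE⁻¹ h) = Q.aV⁻¹ (Q.src h) := by
  have := Q.comm_src (Q.aE⁻¹ h)
  rw [← Equiv.Perm.mul_apply, mul_inv_cancel, Equiv.Perm.one_apply] at this
  rw [this, ← Equiv.Perm.mul_apply, inv_mul_cancel, Equiv.Perm.one_apply]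

lemma comm_tgt_inv (h : Q.E) : Q.tgt (Q.aE⁻¹ h) = Q.aV⁻¹ (Q.tgt h) := by
  have := Q.comm_tgt (Q.aE⁻¹ h)
  rw [← Equiv.Perm.mul_apply, mul_inv_cancel, Equiv.Perm.one_apply] at this
  rw [this, ← Equiv.Perm.mul_apply, inv_mul_cancel, Equiv.Perm.one_apply]

lemma comm_src_zpow (n : ℤ) (h : Q.E) :
    Q.src ((Q.aE ^ n) h) = (Q.aV ^ n) (Q.src h) := by
  induction n using Int.induction_on generalizing h with
  | zero => simp
  | succ k ih =>
      rw [zpow_add_one, Equiv.Perm.mul_apply, ih, Q.comm_src, ← Equiv.Perm.mul_apply,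
        ← zpow_add_one]
  | pred k ih =>
      rw [zpow_sub_one, Equiv.Perm.mul_apply, ih, Q.comm_src_inv, ← Equiv.Perm.mul_apply,
        ← zpow_sub_one]

lemma comm_tgt_zpow (n : ℤ) (h : Q.E) :
    Q.tgt ((Q.aE ^ n) h) = (Q.aV ^ n) (Q.tgt h) := by
  induction n using Int.induction_on generalizing h with
  | zero => simp
  | succ k ih =>
      rw [zpow_add_one, Equiv.Perm.mul_apply, ih, Q.comm_tgt, ← Equiv.Perm.mul_apply,
        ← zpow_add_one]
  | pred k ih =>
      rw [zpow_sub_one, Equiv.Perm.mul_apply, ih, Q.comm_tgt_inv, ← Equiv.Perm.mul_apply,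
        ← zpow_sub_one]

end PreGraph
/-- The contraction setup: a finite oriented graph with admissible automorphism `a`,
two distinct `a`-orbits `[i₊] ≠ [i₋]` of equal size, with no loops at their vertices, such
that no two edges with endpoints in `[i₊] ∪ [i₋]` and distinct endpoints share exactly one
endpoint, together with a fixed edge `e₀` from `[i₊]` to `[i₋]`. -/
structure CSetup extends PreGraph where
  admissible : ∀ h, src h ≠ tgt h → ¬ inOrbit aV (src h) (tgt h)
  ip : V
  im : V
  orb_ne : ¬ inOrbit aV ip im
  orb_card : Nat.card {v : V // inOrbit aV ip v} = Nat.card {v : V // inOrbit aV im v}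
  no_loops : ∀ h, src h = tgt h → ¬ (inOrbit aV ip (src h) ∨ inOrbit aV im (src h))
  no_share : ∀ h l, src h ≠ tgt h →
      (inOrbit aV ip (src h) ∨ inOrbit aV im (src h)) →
      (inOrbit aV ip (tgt h) ∨ inOrbit aV im (tgt h)) →
      (inOrbit aV ip (src l) ∨ inOrbit aV im (src l)) →
      (inOrbit aV ip (tgt l) ∨ inOrbit aV im (tgt l)) →
      (src l = src h ∨ src l = tgt h) →
      (tgt l = src h ∨ tgt l = tgt h)
  e0 : E
  e0_src : inOrbit aV ip (src e0)
  e0_tgt : inOrbit aV im (tgt e0)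

namespace CSetup

variable (C : CSetup)

lemma ip_not_im {v : C.V} (h : inOrbit C.aV C.ip v) : ¬ inOrbit C.aV C.im v :=
  fun h' => C.orb_ne (inOrbit_trans h (inOrbit_symm h'))

lemma im_not_ip {v : C.V} (h : inOrbit C.aV C.im v) : ¬ inOrbit C.aV C.ip v :=
  fun h' => C.orb_ne (inOrbit_trans h' (inOrbit_symm h))

/-- `h_k` ranges over the `a`-orbit of the fixed edge `e₀`. -/
def isHK (k : C.E) : Prop := inOrbit C.aE C.e0 k

lemma hk_src {k : C.E} (h : C.isHK k) : inOrbit C.aV C.ip (C.src k) := by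
  obtain ⟨n, rfl⟩ := h
  rw [C.comm_src_zpow]
  obtain ⟨m, hm⟩ := C.e0_src
  exact ⟨n + m, by rw [zpow_add, Equiv.Perm.mul_apply, hm]⟩

lemma hk_tgt {k : C.E} (h : C.isHK k) : inOrbit C.aV C.im (C.tgt k) := by
  obtain ⟨n, rfl⟩ := h
  rw [C.comm_tgt_zpow]
  obtain ⟨m, hm⟩ := C.e0_tgt
  exact ⟨n + m, by rw [zpow_add, Equiv.Perm.mul_apply, hm]⟩

/-- An edge whose source lies in `[i₋]` has its target outside `[i₋]`. -/
lemma tgt_escapes {l : C.E} (h : inOrbit C.aV C.im (C.src l)) :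
    ¬ inOrbit C.aV C.im (C.tgt l) := by
  intro h'
  by_cases hst : C.src l = C.tgt l
  · exact C.no_loops l hst (Or.inr h)
  · exact C.admissible l hst (inOrbit_trans (inOrbit_symm h) h')

/-- An edge whose target lies in `[i₋]` has its source outside `[i₋]`, unless it is a loop;
but loops at `[i₋]` are excluded, so the source is outside `[i₋]`. -/
lemma src_escapes {l : C.E} (h : inOrbit C.aV C.im (C.tgt l)) :
    ¬ inOrbit C.aV C.im (C.src l) := by
  intro h'
  by_cases hst : C.src l = C.tgt l
  · exact C.no_loops l hst (Or.inr h')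
  · exact C.admissible l hst (inOrbit_trans (inOrbit_symm h') h)

/-- The predicate carving the contracted edge set `Ω̂` out of the ambient sum type:
old edges not incident to `[i₋]`, composites `l₁h_k` (with `l₁′ = h_k″`), and composites
`h̄_k l₂` (with `l₂″ = h_k″`, `l₂ ≠ h_k`). -/
def PHat : C.E ⊕ (C.E × C.E) ⊕ (C.E × C.E) → Prop
  | Sum.inl h => ¬ inOrbit C.aV C.im (C.src h) ∧ ¬ inOrbit C.aV C.im (C.tgt h)
  | Sum.inr (Sum.inl (k, l)) => C.isHK k ∧ C.src l = C.tgt k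
  | Sum.inr (Sum.inr (k, l)) => C.isHK k ∧ C.tgt l = C.tgt k ∧ l ≠ k

/-- The vertex set `𝐈̂ = 𝐈 − [i₋]` of the contracted graph. -/
def VHat : Type := {v : C.V // ¬ inOrbit C.aV C.im v}

/-- The edge set `Ω̂` of the contracted graph. -/
def EHat : Type := {r : C.E ⊕ (C.E × C.E) ⊕ (C.E × C.E) // C.PHat r}

instance : Fintype C.VHat := by
  classical exact (Subtype.fintype _)

instance : Fintype C.EHat := by
  classical exact (Subtype.fintype _)

instance : Nonempty C.VHat := ⟨⟨C.ip, C.ip_not_im (inOrbit_refl _ _)⟩⟩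

/-- The source map of the contracted graph. -/
def srcHat : C.EHat → C.VHat
  | ⟨Sum.inl h, pf⟩ => ⟨C.src h, pf.1⟩
  | ⟨Sum.inr (Sum.inl (k, _)), pf⟩ => ⟨C.src k, C.ip_not_im (C.hk_src pf.1)⟩
  | ⟨Sum.inr (Sum.inr (k, l)), pf⟩ =>
      ⟨C.src l, C.src_escapes (pf.2.1 ▸ C.hk_tgt pf.1)⟩

/-- The target map of the contracted graph. -/
def tgtHat : C.EHat → C.VHat
  | ⟨Sum.inl h, pf⟩ => ⟨C.tgt h, pf.2⟩
  | ⟨Sum.inr (Sum.inl (k, l)), pf⟩ =>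
      ⟨C.tgt l, C.tgt_escapes (pf.2 ▸ C.hk_tgt pf.1)⟩
  | ⟨Sum.inr (Sum.inr (k, _)), pf⟩ => ⟨C.src k, C.ip_not_im (C.hk_src pf.1)⟩

/-- The vertex part of the induced automorphism `â`. -/
def aVHat : Equiv.Perm C.VHat :=
  Equiv.Perm.subtypePerm C.aV (by
    intro v
    exact not_congr (inOrbit_apply C.aV C.im v))

/-- The induced automorphism on the ambient contracted edge type. -/
def aERaw : Equiv.Perm (C.E ⊕ (C.E × C.E) ⊕ (C.E × C.E)) :=
  Equiv.sumCongr C.aE (Equiv.sumCongr (Equiv.prodCongr C.aE C.aE) (Equiv.prodCongr C.aE C.aE))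

lemma pHat_aERaw (r : C.E ⊕ (C.E × C.E) ⊕ (C.E × C.E)) :
    C.PHat r ↔ C.PHat (C.aERaw r) := by
  rcases r with h | ⟨k, l⟩ | ⟨k, l⟩
  · simp only [aERaw, Equiv.sumCongr_apply, Sum.map_inl, PHat, C.comm_src, C.comm_tgt,
      inOrbit_apply]
  · simp only [aERaw, Equiv.sumCongr_apply, Sum.map_inr, Sum.map_inl, Prod.map_apply,
      Equiv.prodCongr_apply, PHat, isHK, inOrbit, C.comm_src, C.comm_tgt]
    constructor
    · rintro ⟨⟨n, hn⟩, h2⟩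
      exact ⟨⟨1 + n, by rw [zpow_add, Equiv.Perm.mul_apply, hn, zpow_one]⟩, by rw [h2]⟩
    · rintro ⟨⟨n, hn⟩, h2⟩
      refine ⟨⟨-1 + n, ?_⟩, C.aV.injective h2⟩
      have hh : (C.aE ^ (-1 + n : ℤ)) C.e0 = C.aE⁻¹ ((C.aE ^ n) C.e0) := by
        rw [zpow_add, Equiv.Perm.mul_apply, zpow_neg_one]
      rw [hh, hn, ← Equiv.Perm.mul_apply, inv_mul_cancel, Equiv.Perm.one_apply]
  · simp only [aERaw, Equiv.sumCongr_apply, Sum.map_inr, Prod.map_apply,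
      Equiv.prodCongr_apply, PHat, isHK, inOrbit, C.comm_tgt]
    constructor
    · rintro ⟨⟨n, hn⟩, h2, h3⟩
      refine ⟨⟨1 + n, by rw [zpow_add, Equiv.Perm.mul_apply, hn, zpow_one]⟩, by rw [h2],
        fun hc => h3 (C.aE.injective hc)⟩
    · rintro ⟨⟨n, hn⟩, h2, h3⟩
      refine ⟨⟨-1 + n, ?_⟩, C.aV.injective h2, fun hc => h3 (by rw [hc])⟩
      have hh : (C.aE ^ (-1 + n : ℤ)) C.e0 = C.aE⁻¹ ((C.aE ^ n) C.e0) := by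
        rw [zpow_add, Equiv.Perm.mul_apply, zpow_neg_one]
      rw [hh, hn, ← Equiv.Perm.mul_apply, inv_mul_cancel, Equiv.Perm.one_apply]

/-- The edge part of the induced automorphism `â`. -/
def aEHat : Equiv.Perm C.EHat :=
  Equiv.Perm.subtypePerm C.aERaw (fun r => (C.pHat_aERaw r).symm)

lemma srcHat_aEHat (r : C.EHat) : C.srcHat (C.aEHat r) = C.aVHat (C.srcHat r) := by
  rcases r with ⟨h | ⟨k, l⟩ | ⟨k, l⟩, pf⟩
  · exact Subtype.ext (C.comm_src h)
  · exact Subtype.ext (C.comm_src k)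
  · exact Subtype.ext (C.comm_src l)

lemma tgtHat_aEHat (r : C.EHat) : C.tgtHat (C.aEHat r) = C.aVHat (C.tgtHat r) := by
  rcases r with ⟨h | ⟨k, l⟩ | ⟨k, l⟩, pf⟩
  · exact Subtype.ext (C.comm_tgt h)
  · exact Subtype.ext (C.comm_tgt l)
  · exact Subtype.ext (C.comm_src k)

/-- The contracted graph `(𝐈̂, Ω̂)` with its induced automorphism `â`. -/
def GHat : PreGraph where
  V := C.VHat
  E := C.EHat
  nonemptyV := inferInstance
  src := C.srcHat
  tgt := C.tgtHat
  aV := C.aVHat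
  aE := C.aEHat
  comm_src := C.srcHat_aEHat
  comm_tgt := C.tgtHat_aEHat

end CSetup

/-- `K`, an algebraic closure of `𝔽_p`. -/
abbrev Kp (p : ℕ) [Fact p.Prime] : Type := AlgebraicClosure (ZMod p)

/-- An `a`-invariant dimension vector, i.e. an element of `ℕ[I]`, `I = 𝐈/a`. -/
structure DimVec (Q : PreGraph) where
  d : Q.V → ℕ
  inv : ∀ v, d (Q.aV v) = d v

namespace DimVec

/-- The sum of two dimension vectors. -/
def add {Q : PreGraph} (A B : DimVec Q) : DimVec Q :=
  ⟨fun v => A.d v + B.d v, fun v =>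
    show A.d (Q.aV v) + B.d (Q.aV v) = A.d v + B.d v by rw [A.inv, B.inv]⟩

lemma inv_zpow {Q : PreGraph} (D : DimVec Q) (n : ℤ) (v : Q.V) :
    D.d ((Q.aV ^ n) v) = D.d v := by
  induction n using Int.induction_on generalizing v with
  | zero => simp
  | succ k ih => rw [zpow_add_one, Equiv.Perm.mul_apply, ih, D.inv]
  | pred k ih =>
      rw [zpow_sub_one, Equiv.Perm.mul_apply, ih]
      have := D.inv (Q.aV⁻¹ v)
      rw [← Equiv.Perm.mul_apply, mul_inv_cancel, Equiv.Perm.one_apply] at this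
      exact this.symm

end DimVec

section RepTheory

variable (p e : ℕ) [Fact p.Prime] (Q : PreGraph) (D : DimVec Q)

/-- The representation space `E_𝐕 = ⊕_{h ∈ Ω} Hom(𝐕_{h′}, 𝐕_{h″})`, in the fixed bases. -/
def RepSp : Type :=
  ∀ h : Q.E, Matrix (Fin (D.d (Q.tgt h))) (Fin (D.d (Q.src h))) (Kp p)

/-- The group `G_𝐕 = ∏_{𝐢} GL(𝐕_𝐢)`. -/
def GGr : Type := ∀ v : Q.V, GL (Fin (D.d v)) (Kp p)

instance : Group (GGr p Q D) := by unfold GGr; infer_instance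

/-- The conjugation action `(g·x)_h = g_{h″} x_h g_{h′}^{-1}` of `G_𝐕` on `E_𝐕`. -/
def actE (g : GGr p Q D) (x : RepSp p Q D) : RepSp p Q D :=
  fun h => (g (Q.tgt h)).val * x h * ((g (Q.src h))⁻¹).val

/-- The twisted Frobenius `𝐅 = Fr ∘ a` on the representation space: `(𝐅x)_h` is obtained
from `x_{a(h)}` by raising all matrix entries to the `q = pᵉ`-th power (transported along
the identifications `𝐕_{a(𝐢)} = 𝐕_𝐢` coming from the compatible `a`-action in the fixed
bases). -/
def TwFE (x : RepSp p Q D) : RepSp p Q D := fun h =>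
  fun i j =>
    (x (Q.aE h)
      (finCongr (show D.d (Q.tgt h) = D.d (Q.tgt (Q.aE h)) by rw [Q.comm_tgt, D.inv]) i)
      (finCongr (show D.d (Q.src h) = D.d (Q.src (Q.aE h)) by rw [Q.comm_src, D.inv]) j))
    ^ (p ^ e)

/-- The `q = pᵉ`-power Frobenius of `K`. -/
def frobHom : Kp p →+* Kp p := iterateFrobenius (Kp p) p e

/-- The twisted Frobenius on `G_𝐕`. -/
def TwFG (g : GGr p Q D) : GGr p Q D := fun v =>
  Units.mapEquiv
    (Matrix.reindexAlgEquiv (Kp p) (Kp p)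
      (finCongr (show D.d (Q.aV v) = D.d v from D.inv v))).toMulEquiv
    (Units.map (RingHom.toMonoidHom (frobHom p e).mapMatrix) (g (Q.aV v)))

end RepTheory

section Blocks

variable (p e : ℕ) [Fact p.Prime] (Q : PreGraph) (Dt Dw : DimVec Q)

/-- `S_𝐖 ⊆ E_𝐕`: the representations leaving the graded subspace `𝐖` (spanned by the last
`ω` basis vectors in each graded piece, `𝐕 = 𝐓 ⊕ 𝐖`) invariant, i.e. those whose
`(𝐓-row, 𝐖-column)` block vanishes. -/
def SWSet : Set (RepSp p Q (Dt.add Dw)) :=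
  {x | ∀ (h : Q.E) (i : Fin (Dt.d (Q.tgt h))) (j : Fin (Dw.d (Q.src h))),
    x h (Fin.castAdd _ i) (Fin.natAdd _ j) = 0}

/-- `x ↦ x^𝐓`, the induced representation on `𝐓 ≅ 𝐕/𝐖` (the upper-left block). -/
def blockT (x : RepSp p Q (Dt.add Dw)) : RepSp p Q Dt :=
  fun h i j => x h (Fin.castAdd _ i) (Fin.castAdd _ j)

/-- `x ↦ x^𝐖`, the restricted representation on `𝐖` (the lower-right block). -/
def blockW (x : RepSp p Q (Dt.add Dw)) : RepSp p Q Dw :=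
  fun h i j => x h (Fin.natAdd _ i) (Fin.natAdd _ j)

end Blocks

section Contraction

variable (p e : ℕ) [Fact p.Prime] (C : CSetup) (D : DimVec C.toPreGraph)

/-- The heart locus `E_𝐕^♥ = {x : x_{h_k} is an isomorphism for all k}`. -/
def heartSet : Set (RepSp p C.toPreGraph D) :=
  {x | ∀ k : C.E, C.isHK k → Function.Bijective (Matrix.mulVecLin (x k))}

/-- A dimension vector is balanced when `ν_{[i₊]} = ν_{[i₋]}`, i.e. it lies in `ℕ[Î]`. -/
def DimVec.bal : Prop := D.d C.ip = D.d C.im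

/-- The dimension vector induced on the contracted graph. -/
def DimVec.hat : DimVec C.GHat :=
  ⟨fun v => D.d v.1, fun v => D.inv v.1⟩

variable {p C D}

/-- Multiplication of rectangular matrices after recasting the inner index (used for the
composite edges of the contracted graph; the sizes agree in all relevant cases). -/
def castMul {a b c d : ℕ} (A : Matrix (Fin a) (Fin b) (Kp p)) (B : Matrix (Fin c) (Fin d) (Kp p)) :
    Matrix (Fin a) (Fin d) (Kp p) :=
  if h : b = c then A * B.submatrix (⇑(finCongr h)) id else 0

/-- The inverse of a rectangular matrix of square shape (used for `x_{h_k}^{-1}`; the two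
sizes agree in all relevant cases). -/
def invSq {a b : ℕ} (M : Matrix (Fin a) (Fin b) (Kp p)) : Matrix (Fin b) (Fin a) (Kp p) :=
  if h : a = b then ((M.submatrix (⇑(finCongr h.symm)) id)⁻¹).submatrix id (⇑(finCongr h))
  else 0

variable (p C D)

/-- The contraction map `μ_ν : E_𝐕 → E_𝐕̂`, `x ↦ x̂`:  `x̂_h = x_h` for old edges,
`x̂_{l₁h_k} = x_{l₁} x_{h_k}` and `x̂_{h̄_k l₂} = x_{h_k}^{-1} x_{l₂}` for composite edges. -/
def muE (x : RepSp p C.toPreGraph D) : RepSp p C.GHat (D.hat C)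
  | ⟨Sum.inl h, _⟩ => x h
  | ⟨Sum.inr (Sum.inl (k, l)), _⟩ => castMul (x l) (x k)
  | ⟨Sum.inr (Sum.inr (k, l)), _⟩ => castMul (invSq (x k)) (x l)

end Contraction

section Hall

open scoped Classical

variable (p e : ℕ) [Fact p.Prime]

/-- The field `ℚ(q^{1/2})`, realized as the subfield of `ℝ` generated by `√q`, `q = pᵉ`. -/
def FF : Subfield ℝ := Subfield.closure {Real.sqrt (p ^ e)}

/-- The element `q^{1/2} ∈ ℚ(q^{1/2})`. -/
def sqq : FF p e := ⟨Real.sqrt (p ^ e), Subfield.subset_closure rfl⟩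

variable (Q : PreGraph) (D : DimVec Q)

/-- The space `H_{ν,Ω}` of `G_𝐕^𝐅`-invariant `ℚ(q^{1/2})`-valued functions on `E_𝐕^𝐅`
(realized as functions on `E_𝐕` vanishing off the twisted Frobenius fixed points and
invariant under the fixed subgroup). -/
def HallSet : Set (RepSp p Q D → FF p e) :=
  {f | (∀ x, TwFE p e Q D x ≠ x → f x = 0) ∧
       (∀ g x, TwFG p e Q D g = g → f (actE p Q D g x) = f x)}

/-- The number of elements of `G_𝐕^𝐅`. -/
def GFcard : ℕ := Nat.card {g : GGr p Q D // TwFG p e Q D g = g}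

variable (Dt Dw : DimVec Q)

/-- The weight `m_Ω(τ,ω) = Σ_{𝐢∈𝐈} τ_𝐢 ω_𝐢 + Σ_{h∈Ω} τ_{h′} ω_{h″}`. -/
def mWt : ℤ :=
  (∑ᶠ v : Q.V, (Dt.d v * Dw.d v : ℤ)) + ∑ᶠ h : Q.E, (Dt.d (Q.src h) * Dw.d (Q.tgt h) : ℤ)

/-- Membership in the unipotent radical `U` of the stabilizer `Q` of `𝐖`, intersected with
the twisted Frobenius fixed subgroup: block shape `[[1,0],[*,1]]`. -/
def uMem (u : GGr p Q (Dt.add Dw)) : Prop :=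
  TwFG p e Q (Dt.add Dw) u = u ∧
  ∀ v : Q.V,
    (∀ i j : Fin (Dt.d v), (u v).val (Fin.castAdd _ i) (Fin.castAdd _ j)
      = if i = j then 1 else 0) ∧
    (∀ (i : Fin (Dt.d v)) (j : Fin (Dw.d v)),
      (u v).val (Fin.castAdd _ i) (Fin.natAdd _ j) = 0) ∧
    (∀ i j : Fin (Dw.d v), (u v).val (Fin.natAdd _ i) (Fin.natAdd _ j)
      = if i = j then 1 else 0)

/-- Membership in the parabolic stabilizer `Q` of `𝐖` (block lower triangular), intersected
with the twisted Frobenius fixed subgroup. -/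
def qMem (b : GGr p Q (Dt.add Dw)) : Prop :=
  TwFG p e Q (Dt.add Dw) b = b ∧
  ∀ (v : Q.V) (i : Fin (Dt.d v)) (j : Fin (Dw.d v)),
    (b v).val (Fin.castAdd _ i) (Fin.natAdd _ j) = 0

/-- The pairs `(g, x) ∈ G_𝐕^𝐅 × S_𝐖^𝐅` with `x` in the prescribed locus
(`locus = E_𝐕` for the plain induction diagram, `locus = E_𝐕^♥` for its ♥-version). -/
def goodPair (locus : Set (RepSp p Q (Dt.add Dw))) (c : GGr p Q (Dt.add Dw) × RepSp p Q (Dt.add Dw)) : Prop :=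
  TwFG p e Q (Dt.add Dw) c.1 = c.1 ∧ TwFE p e Q (Dt.add Dw) c.2 = c.2 ∧
    c.2 ∈ SWSet p Q Dt Dw ∧ c.2 ∈ locus

/-- The relation whose classes are the `U^𝐅`-orbits on `G_𝐕^𝐅 × S_𝐖^𝐅`
(`b·(g,x) = (g b^{-1}, b·x)`). -/
def relU (locus : Set (RepSp p Q (Dt.add Dw)))
    (c d : GGr p Q (Dt.add Dw) × RepSp p Q (Dt.add Dw)) : Prop :=
  goodPair p e Q Dt Dw locus c ∧
    ∃ u, uMem p e Q Dt Dw u ∧ d.1 = c.1 * u⁻¹ ∧ d.2 = actE p Q (Dt.add Dw) u c.2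

/-- The relation whose classes are the `Q^𝐅`-orbits on `G_𝐕^𝐅 × S_𝐖^𝐅`. -/
def relQ (locus : Set (RepSp p Q (Dt.add Dw)))
    (c d : GGr p Q (Dt.add Dw) × RepSp p Q (Dt.add Dw)) : Prop :=
  goodPair p e Q Dt Dw locus c ∧
    ∃ b, qMem p e Q Dt Dw b ∧ d.1 = c.1 * b⁻¹ ∧ d.2 = actE p Q (Dt.add Dw) b c.2

/-- `𝐄′ = (G_𝐕 × S_𝐖)/U` on twisted Frobenius fixed points. -/
def Eprime (locus : Set (RepSp p Q (Dt.add Dw))) : Type :=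
  Quot (relU p e Q Dt Dw locus)

/-- `𝐄″ = (G_𝐕 × S_𝐖)/Q` on twisted Frobenius fixed points. -/
def Edouble (locus : Set (RepSp p Q (Dt.add Dw))) : Type :=
  Quot (relQ p e Q Dt Dw locus)

variable {locus : Set (RepSp p Q (Dt.add Dw))}

/-- A class represented by a pair in `G_𝐕^𝐅 × S_𝐖^𝐅` (with `x` in the locus). -/
def goodClU (c : Eprime p e Q Dt Dw locus) : Prop :=
  ∃ a, Quot.mk _ a = c ∧ goodPair p e Q Dt Dw locus a

/-- A class represented by a pair in `G_𝐕^𝐅 × S_𝐖^𝐅` (with `x` in the locus). -/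
def goodClQ (c : Edouble p e Q Dt Dw locus) : Prop :=
  ∃ a, Quot.mk _ a = c ∧ goodPair p e Q Dt Dw locus a

/-- `p₁ : 𝐄′ → E_𝐓 × E_𝐖`, `[g,x]_U ↦ (x^𝐓, x^𝐖)`. -/
def pOne (c : Eprime p e Q Dt Dw locus) : RepSp p Q Dt × RepSp p Q Dw :=
  (blockT p Q Dt Dw (Quot.out c).2, blockW p Q Dt Dw (Quot.out c).2)

/-- `p₂ : 𝐄′ → 𝐄″`, `[g,x]_U ↦ [g,x]_Q`. -/
def pTwo (c : Eprime p e Q Dt Dw locus) : Edouble p e Q Dt Dw locus :=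
  Quot.mk _ (Quot.out c)

/-- `p₃ : 𝐄″ → E_𝐕`, `[g,x]_Q ↦ g·x`. -/
def pThree (c : Edouble p e Q Dt Dw locus) : RepSp p Q (Dt.add Dw) :=
  actE p Q (Dt.add Dw) (Quot.out c).1 (Quot.out c).2

/-- `(p₃)_! (p₂)_! (p₁)^* (f ⊗ g)`. -/
def indRaw (f : RepSp p Q Dt → FF p e) (g : RepSp p Q Dw → FF p e)
    (x : RepSp p Q (Dt.add Dw)) : FF p e :=
  ∑ᶠ (c : Edouble p e Q Dt Dw locus) (_ : pThree p e Q Dt Dw c = x),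
    ∑ᶠ (d : Eprime p e Q Dt Dw locus) (_ : pTwo p e Q Dt Dw d = c),
      f (pOne p e Q Dt Dw d).1 * g (pOne p e Q Dt Dw d).2

variable (locus)

/-- The induction product
`Ind^ν_{τ,ω} = (q^{1/2})^{−m_Ω(τ,ω)} (#(G_𝐓^𝐅 × G_𝐖^𝐅))^{-1} (p₃)_!(p₂)_!(p₁)^*` of the
Hall algebra, built from the induction diagram over the locus. -/
def Ind (f : RepSp p Q Dt → FF p e) (g : RepSp p Q Dw → FF p e) :
    RepSp p Q (Dt.add Dw) → FF p e :=
  fun x => (sqq p e) ^ (-(mWt Q Dt Dw)) *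
    ((GFcard p e Q Dt : FF p e) * (GFcard p e Q Dw : FF p e))⁻¹ *
    indRaw p e Q Dt Dw (locus := locus) f g x

end Hall

section MuJ

open scoped Classical

variable (p e : ℕ) [Fact p.Prime] (C : CSetup) (D : DimVec C.toPreGraph)

/-- `E_𝐕^{♥,𝐅}`: the twisted Frobenius fixed points of the heart locus. -/
def heartF : Set (RepSp p C.toPreGraph D) :=
  {x | TwFE p e C.toPreGraph D x = x ∧ x ∈ heartSet p C D}

/-- `H^♥_{ν,Ω}`: the `G_𝐕^𝐅`-invariant functions on `E_𝐕^{♥,𝐅}` (realized as functions on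
`E_𝐕` vanishing off `E_𝐕^{♥,𝐅}`). -/
def HallSetH : Set (RepSp p C.toPreGraph D → FF p e) :=
  {f | (∀ x, x ∉ heartF p e C D → f x = 0) ∧
       (∀ g x, TwFG p e C.toPreGraph D g = g → f (actE p C.toPreGraph D g x) = f x)}

/-- `H^c_{ν,Ω}`: the invariant functions on `E_𝐕^𝐅` vanishing on `E_𝐕^{♥,𝐅}`, i.e. those
supported on the complement `E_𝐕^{c,𝐅}`. -/
def HallSetC : Set (RepSp p C.toPreGraph D → FF p e) :=
  {f | f ∈ HallSet p e C.toPreGraph D ∧ ∀ x ∈ heartSet p C D, f x = 0}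

/-- `j_!` (extension by zero from `E_𝐕^{♥,𝐅}` to `E_𝐕^𝐅`), and likewise the restriction
map `j^*` of functions (in this ambient model both are given by truncation to the heart
locus). -/
def jOp (f : RepSp p C.toPreGraph D → FF p e) : RepSp p C.toPreGraph D → FF p e :=
  fun x => if x ∈ heartF p e C D then f x else 0

/-- The pullback `μ_ν^*` along the contraction map `μ_ν : E_𝐕^{♥,𝐅} → E_𝐕̂^{𝐅̂}`,
`f ↦ f ∘ μ_ν` (realized ambiently, vanishing off `E_𝐕^{♥,𝐅}`). -/
def muPull (f : RepSp p C.GHat (D.hat C) → FF p e) : RepSp p C.toPreGraph D → FF p e :=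
  fun x => if x ∈ heartF p e C D then f (muE p C D x) else 0

/-- `φ₁(i₋) = #[𝐢₋]`. -/
def phiIm : ℕ := Nat.card {v : C.V // inOrbit C.aV C.im v}

/-- `φ₁(i₊) = #[𝐢₊]`. -/
def phiIp : ℕ := Nat.card {v : C.V // inOrbit C.aV C.ip v}

/-- The twisted pullback `μ_ν^⋆ = (q^{-1/2})^{ν_{i₋}² φ₁(i₋)} μ_ν^*`. -/
def muStar (f : RepSp p C.GHat (D.hat C) → FF p e) : RepSp p C.toPreGraph D → FF p e :=
  fun x => (sqq p e) ^ (-((D.d C.im : ℤ) ^ 2 * (phiIm C : ℤ))) * muPull p e C D f x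

/-- The projection `G_𝐕 → G_𝐕̂` forgetting the `[𝐢₋]`-components. -/
def projG (g : GGr p C.toPreGraph D) : GGr p C.GHat (D.hat C) := fun v => g v.1

/-- The subgroup `G_𝐕^{[𝐢₋]} = ∏_{𝐢 ∈ [𝐢₋]} GL(𝐕_𝐢) ⊆ G_𝐕`, intersected with the twisted
Frobenius fixed subgroup. -/
def GimSet : Set (GGr p C.toPreGraph D) :=
  {g | TwFG p e C.toPreGraph D g = g ∧ ∀ v, ¬ inOrbit C.aV C.im v → g v = 1}

/-- The characteristic function `ζ_𝒪` of the `G_𝐕^𝐅`-orbit of a point `x₀`. -/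
def zetaOrb (x0 : RepSp p C.toPreGraph D) : RepSp p C.toPreGraph D → FF p e :=
  fun y => if ∃ g, TwFG p e C.toPreGraph D g = g ∧ actE p C.toPreGraph D g x0 = y then 1 else 0

/-- The characteristic function of the `G_𝐕̂^{𝐅̂}`-orbit of a point of `E_𝐕̂^{𝐅̂}`. -/
def zetaOrbHat (z0 : RepSp p C.GHat (D.hat C)) : RepSp p C.GHat (D.hat C) → FF p e :=
  fun z => if ∃ g, TwFG p e C.GHat (D.hat C) g = g ∧ actE p C.GHat (D.hat C) g z0 = z
    then 1 else 0

end MuJ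

section Diag

variable {p : ℕ} [Fact p.Prime]

/-- The block diagonal invertible matrix `diag(A, B)`. -/
def glFromBlocks {m n : ℕ} (A : GL (Fin m) (Kp p)) (B : GL (Fin n) (Kp p)) :
    GL (Fin (m + n)) (Kp p) where
  val := (Matrix.fromBlocks A.val 0 0 B.val).submatrix
    (⇑finSumFinEquiv.symm) (⇑finSumFinEquiv.symm)
  inv := (Matrix.fromBlocks (A⁻¹).val 0 0 (B⁻¹).val).submatrix
    (⇑finSumFinEquiv.symm) (⇑finSumFinEquiv.symm)
  val_inv := by
    rw [Matrix.submatrix_mul_equiv _ _ _ finSumFinEquiv.symm _]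
    have h1 : A.val * (A⁻¹).val = 1 := by rw [← Units.val_mul, mul_inv_cancel, Units.val_one]
    have h2 : B.val * (B⁻¹).val = 1 := by rw [← Units.val_mul, mul_inv_cancel, Units.val_one]
    simp only [Matrix.fromBlocks_multiply, Matrix.mul_zero, Matrix.zero_mul, add_zero,
      zero_add]
    rw [h1, h2, Matrix.fromBlocks_one]
    exact Matrix.submatrix_one_equiv finSumFinEquiv.symm
  inv_val := by
    rw [Matrix.submatrix_mul_equiv _ _ _ finSumFinEquiv.symm _]
    have h1 : (A⁻¹).val * A.val = 1 := by rw [← Units.val_mul, inv_mul_cancel, Units.val_one]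
    have h2 : (B⁻¹).val * B.val = 1 := by rw [← Units.val_mul, inv_mul_cancel, Units.val_one]
    simp only [Matrix.fromBlocks_multiply, Matrix.mul_zero, Matrix.zero_mul, add_zero,
      zero_add]
    rw [h1, h2, Matrix.fromBlocks_one]
    exact Matrix.submatrix_one_equiv finSumFinEquiv.symm

/-- The block diagonal embedding `G_𝐓 × G_𝐖 → G_𝐕`. -/
def embedDiag {Q : PreGraph} {Dt Dw : DimVec Q} (s : GGr p Q Dt) (t : GGr p Q Dw) :
    GGr p Q (Dt.add Dw) :=
  fun v => glFromBlocks (s v) (t v)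

end Diag

section QuotMaps

/-- The map on quotients induced by the identity (e.g. the inclusions `𝐄′^{♥,𝐅} → 𝐄′^𝐅`,
`𝐄″^{♥,𝐅} → 𝐄″^𝐅`, and `p₂`-type maps), defined on representatives. -/
def quotMap {α : Sort*} (r s : α → α → Prop) : Quot r → Quot s :=
  fun c => Quot.mk s (Quot.out c)

variable (p e : ℕ) [Fact p.Prime] (C : CSetup) (Dt Dw : DimVec C.toPreGraph)

/-- `(g, x) ↦ (ĝ, μ_ν(x))` on pairs. -/
def pairProjHat
    (c : GGr p C.toPreGraph (Dt.add Dw) × RepSp p C.toPreGraph (Dt.add Dw)) :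
    GGr p C.GHat ((Dt.hat C).add (Dw.hat C)) × RepSp p C.GHat ((Dt.hat C).add (Dw.hat C)) :=
  (projG p C (Dt.add Dw) c.1, muE p C (Dt.add Dw) c.2)

/-- The map `μ′_ν : 𝐄′^{♥,𝐅} → 𝐄̂′^{𝐅̂}` induced by the contraction map and the projection
`G_𝐕 → G_𝐕̂`. -/
def muEprime :
    Eprime p e C.toPreGraph Dt Dw (heartSet p C (Dt.add Dw)) →
      Eprime p e C.GHat (Dt.hat C) (Dw.hat C) Set.univ :=
  fun c => Quot.mk _ (pairProjHat p C Dt Dw (Quot.out c))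

/-- The map `μ″_ν : 𝐄″^{♥,𝐅} → 𝐄̂″^{𝐅̂}`. -/
def muEdouble :
    Edouble p e C.toPreGraph Dt Dw (heartSet p C (Dt.add Dw)) →
      Edouble p e C.GHat (Dt.hat C) (Dw.hat C) Set.univ :=
  fun c => Quot.mk _ (pairProjHat p C Dt Dw (Quot.out c))

end QuotMaps

section AuxMat

open Matrix Function

variable {K : Type*} [Field K]

lemma bij_mulVecLin_iff {n : ℕ} (M : Matrix (Fin n) (Fin n) K) :
    Function.Bijective M.mulVecLin ↔ IsUnit M.det := by
  have hco : ∀ v, M.mulVecLin v = M.mulVec v := fun v => rfl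
  constructor
  · intro h
    rw [← Matrix.isUnit_iff_isUnit_det, ← Matrix.mulVec_injective_iff_isUnit]
    intro a b hab
    exact h.1 (by rw [hco, hco]; exact hab)
  · intro h
    constructor
    · have := Matrix.mulVec_injective_iff_isUnit.mpr ((Matrix.isUnit_iff_isUnit_det _).mpr h)
      intro a b hab
      exact this (by rw [← hco, ← hco]; exact hab)
    · have := Matrix.mulVec_surjective_iff_isUnit.mpr ((Matrix.isUnit_iff_isUnit_det _).mpr h)
      intro v
      obtain ⟨w, hw⟩ := this v
      exact ⟨w, by rw [hco]; exact hw⟩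

lemma submatrix_fsfe {a b c d : ℕ} (M : Matrix (Fin (a + b)) (Fin (c + d)) K) :
    M.submatrix finSumFinEquiv finSumFinEquiv =
      Matrix.fromBlocks (M.submatrix (Fin.castAdd b) (Fin.castAdd d))
        (M.submatrix (Fin.castAdd b) (Fin.natAdd c))
        (M.submatrix (Fin.natAdd a) (Fin.castAdd d))
        (M.submatrix (Fin.natAdd a) (Fin.natAdd c)) := by
  ext i j
  rcases i with i | i <;> rcases j with j | j <;> simp

lemma bij_blocks {a b : ℕ} (M : Matrix (Fin (a + b)) (Fin (a + b)) K)
    (hz : ∀ i j, M (Fin.castAdd b i) (Fin.natAdd a j) = 0) :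
    Function.Bijective M.mulVecLin ↔
      (Function.Bijective (M.submatrix (Fin.castAdd b) (Fin.castAdd b)).mulVecLin ∧
       Function.Bijective (M.submatrix (Fin.natAdd a) (Fin.natAdd a)).mulVecLin) := by
  have hTW : M.submatrix (Fin.castAdd b) (Fin.natAdd a) = 0 := by
    ext i j; exact hz i j
  have h1 : M.det = (M.submatrix (Fin.castAdd b) (Fin.castAdd b)).det *
      (M.submatrix (Fin.natAdd a) (Fin.natAdd a)).det := by
    rw [← Matrix.det_submatrix_equiv_self finSumFinEquiv, submatrix_fsfe, hTW,
      Matrix.det_fromBlocks_zero₁₂]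
  rw [bij_mulVecLin_iff, bij_mulVecLin_iff, bij_mulVecLin_iff, h1, IsUnit.mul_iff]

lemma bij_blocks' {aT aW bT bW : ℕ} (h1 : bT = aT) (h2 : bW = aW)
    (M : Matrix (Fin (aT + aW)) (Fin (bT + bW)) K)
    (hz : ∀ i j, M (Fin.castAdd aW i) (Fin.natAdd bT j) = 0) :
    Function.Bijective M.mulVecLin ↔
      (Function.Bijective (M.submatrix (Fin.castAdd aW) (Fin.castAdd bW)).mulVecLin ∧
       Function.Bijective (M.submatrix (Fin.natAdd aT) (Fin.natAdd bT)).mulVecLin) := by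
  subst h1; subst h2
  exact bij_blocks M hz

lemma inv_blocks {a b : ℕ} (M : Matrix (Fin (a + b)) (Fin (a + b)) K)
    (hz : ∀ i j, M (Fin.castAdd b i) (Fin.natAdd a j) = 0)
    (hT : IsUnit (M.submatrix (Fin.castAdd b) (Fin.castAdd b)).det)
    (hW : IsUnit (M.submatrix (Fin.natAdd a) (Fin.natAdd a)).det) :
    (∀ i j, M⁻¹ (Fin.castAdd b i) (Fin.natAdd a j) = 0) ∧
      M⁻¹.submatrix (Fin.castAdd b) (Fin.castAdd b)
        = (M.submatrix (Fin.castAdd b) (Fin.castAdd b))⁻¹ ∧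
      M⁻¹.submatrix (Fin.natAdd a) (Fin.natAdd a)
        = (M.submatrix (Fin.natAdd a) (Fin.natAdd a))⁻¹ := by
  have hTW : M.submatrix (Fin.castAdd b) (Fin.natAdd a) = 0 := by
    ext i j; exact hz i j
  have hM : M.submatrix finSumFinEquiv finSumFinEquiv =
      Matrix.fromBlocks (M.submatrix (Fin.castAdd b) (Fin.castAdd b)) 0
        (M.submatrix (Fin.natAdd a) (Fin.castAdd b))
        (M.submatrix (Fin.natAdd a) (Fin.natAdd a)) := by
    rw [submatrix_fsfe, hTW]
  have hMi : M⁻¹.submatrix finSumFinEquiv finSumFinEquiv =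
      Matrix.fromBlocks (M.submatrix (Fin.castAdd b) (Fin.castAdd b))⁻¹ 0
        (-((M.submatrix (Fin.natAdd a) (Fin.natAdd a))⁻¹ *
            M.submatrix (Fin.natAdd a) (Fin.castAdd b) *
            (M.submatrix (Fin.castAdd b) (Fin.castAdd b))⁻¹))
        (M.submatrix (Fin.natAdd a) (Fin.natAdd a))⁻¹ := by
    rw [← Matrix.inv_submatrix_equiv M finSumFinEquiv finSumFinEquiv, hM,
      Matrix.inv_fromBlocks_zero₁₂_of_isUnit_iff]
    rw [Matrix.isUnit_iff_isUnit_det, Matrix.isUnit_iff_isUnit_det]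
    exact iff_of_true hT hW
  rw [submatrix_fsfe] at hMi
  have h11 := congrArg Matrix.toBlocks₁₁ hMi
  have h12 := congrArg Matrix.toBlocks₁₂ hMi
  have h22 := congrArg Matrix.toBlocks₂₂ hMi
  simp only [Matrix.toBlocks_fromBlocks₁₁, Matrix.toBlocks_fromBlocks₁₂,
    Matrix.toBlocks_fromBlocks₂₂] at h11 h12 h22
  refine ⟨fun i j => ?_, h11, h22⟩
  have := Matrix.ext_iff.mpr h12 i j
  simpa using this

end AuxMat
section AuxCast

lemma castAdd_finCongr {a b c d : ℕ} (h1 : a = c) (h2 : b = d) (hs : a + b = c + d)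
    (i : Fin a) : Fin.castAdd d (finCongr h1 i) = finCongr hs (Fin.castAdd b i) := by
  subst h1; subst h2; rfl

lemma natAdd_finCongr {a b c d : ℕ} (h1 : a = c) (h2 : b = d) (hs : a + b = c + d)
    (i : Fin b) : Fin.natAdd c (finCongr h2 i) = finCongr hs (Fin.natAdd a i) := by
  subst h1; subst h2; rfl

end AuxCast

section AuxK

variable {p e : ℕ} [Fact p.Prime]

lemma castMul_eq {a b d : ℕ} (M : Matrix (Fin a) (Fin b) (Kp p))
    (N : Matrix (Fin b) (Fin d) (Kp p)) : castMul M N = M * N := by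
  unfold castMul
  rw [dif_pos rfl]
  simp

lemma invSq_eq {a : ℕ} (M : Matrix (Fin a) (Fin a) (Kp p)) : invSq M = M⁻¹ := by
  unfold invSq
  rw [dif_pos rfl]
  simp

lemma map_nonsing_inv {n : ℕ} (M : Matrix (Fin n) (Fin n) (Kp p)) :
    M⁻¹.map (frobHom p e) = (M.map (frobHom p e))⁻¹ := by
  by_cases h : IsUnit M.det
  · refine (Matrix.inv_eq_right_inv ?_).symm
    rw [← Matrix.map_mul, Matrix.mul_nonsing_inv _ h,
      Matrix.map_one _ (map_zero _) (map_one _)]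
  · have h2 : ¬ IsUnit (M.map (frobHom p e)).det := by
      have hdet : (M.map ⇑(frobHom p e)).det = (frobHom p e) M.det :=
        (RingHom.map_det (frobHom p e) M).symm
      rw [hdet, isUnit_iff_ne_zero, ne_eq, map_eq_zero_iff _ (frobHom p e).injective]
      rwa [isUnit_iff_ne_zero, ne_eq] at h
    rw [Matrix.nonsing_inv_apply_not_isUnit _ h, Matrix.nonsing_inv_apply_not_isUnit _ h2,
      Matrix.map_zero _ (map_zero _)]

lemma castMul_map {a b c d : ℕ} (M : Matrix (Fin a) (Fin b) (Kp p))
    (N : Matrix (Fin c) (Fin d) (Kp p)) :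
    (castMul M N).map (frobHom p e) = castMul (M.map (frobHom p e)) (N.map (frobHom p e)) := by
  unfold castMul
  split_ifs with h
  · rw [Matrix.submatrix_map, ← Matrix.map_mul]
  · exact Matrix.map_zero _ (map_zero _)

lemma invSq_map {a b : ℕ} (M : Matrix (Fin a) (Fin b) (Kp p)) :
    (invSq M).map (frobHom p e) = invSq (M.map (frobHom p e)) := by
  unfold invSq
  split_ifs with h
  · rw [Matrix.submatrix_map, ← Matrix.submatrix_map, map_nonsing_inv]
  · exact Matrix.map_zero _ (map_zero _)

end AuxK

section AuxTw

variable {p e : ℕ} [Fact p.Prime]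

lemma dimtgt (Q : PreGraph) (D : DimVec Q) (h : Q.E) :
    D.d (Q.tgt h) = D.d (Q.tgt (Q.aE h)) := by
  rw [Q.comm_tgt, D.inv]

lemma dimsrc (Q : PreGraph) (D : DimVec Q) (h : Q.E) :
    D.d (Q.src h) = D.d (Q.src (Q.aE h)) := by
  rw [Q.comm_src, D.inv]

lemma TwFE_eq_map (Q : PreGraph) (D : DimVec Q) (x : RepSp p Q D) (h : Q.E)
    (h1 : D.d (Q.tgt h) = D.d (Q.tgt (Q.aE h))) (h2 : D.d (Q.src h) = D.d (Q.src (Q.aE h))) :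
    TwFE p e Q D x h
      = ((x (Q.aE h)).submatrix (⇑(finCongr h1)) (⇑(finCongr h2))).map (frobHom p e) := by
  ext i j
  simp only [TwFE, Matrix.map_apply, Matrix.submatrix_apply, frobHom, iterateFrobenius_def]

lemma fixed_apply {Q : PreGraph} {D : DimVec Q} {x : RepSp p Q D}
    (hx : TwFE p e Q D x = x) (h : Q.E)
    (h1 : D.d (Q.tgt h) = D.d (Q.tgt (Q.aE h))) (h2 : D.d (Q.src h) = D.d (Q.src (Q.aE h))) :
    x h = ((x (Q.aE h)).submatrix (⇑(finCongr h1)) (⇑(finCongr h2))).map (frobHom p e) := by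
  conv_lhs => rw [← hx]
  exact TwFE_eq_map Q D x h h1 h2

end AuxTw
section AuxBlock

variable {p e : ℕ} [Fact p.Prime]

lemma castMul_block_zero {aT aW bT bW cT cW dT dW : ℕ}
    (hT : bT = cT) (hW : bW = cW)
    (X : Matrix (Fin (aT + aW)) (Fin (bT + bW)) (Kp p))
    (Y : Matrix (Fin (cT + cW)) (Fin (dT + dW)) (Kp p))
    (hX : ∀ i j, X (Fin.castAdd aW i) (Fin.natAdd bT j) = 0)
    (hY : ∀ i j, Y (Fin.castAdd cW i) (Fin.natAdd dT j) = 0) :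
    (∀ i j, castMul X Y (Fin.castAdd aW i) (Fin.natAdd dT j) = 0) ∧
      (castMul X Y).submatrix (Fin.castAdd aW) (Fin.castAdd dW)
        = castMul (X.submatrix (Fin.castAdd aW) (Fin.castAdd bW))
            (Y.submatrix (Fin.castAdd cW) (Fin.castAdd dW)) ∧
      (castMul X Y).submatrix (Fin.natAdd aT) (Fin.natAdd dT)
        = castMul (X.submatrix (Fin.natAdd aT) (Fin.natAdd bT))
            (Y.submatrix (Fin.natAdd cT) (Fin.natAdd dT)) := by
  subst hT; subst hW
  rw [castMul_eq, castMul_eq, castMul_eq]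
  refine ⟨fun i j => ?_, ?_, ?_⟩
  · rw [Matrix.mul_apply, Fin.sum_univ_add]
    simp [hX, hY]
  · ext i j
    simp only [Matrix.submatrix_apply, Matrix.mul_apply, Fin.sum_univ_add]
    simp [hX]
  · ext i j
    simp only [Matrix.submatrix_apply, Matrix.mul_apply, Fin.sum_univ_add]
    simp [hY]

lemma invSq_block {aT aW bT bW : ℕ} (hT : bT = aT) (hW : bW = aW)
    (Y : Matrix (Fin (aT + aW)) (Fin (bT + bW)) (Kp p))
    (hz : ∀ i j, Y (Fin.castAdd aW i) (Fin.natAdd bT j) = 0)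
    (hTb : Function.Bijective (Y.submatrix (Fin.castAdd aW) (Fin.castAdd bW)).mulVecLin)
    (hWb : Function.Bijective (Y.submatrix (Fin.natAdd aT) (Fin.natAdd bT)).mulVecLin) :
    (∀ i j, invSq Y (Fin.castAdd bW i) (Fin.natAdd aT j) = 0) ∧
      (invSq Y).submatrix (Fin.castAdd bW) (Fin.castAdd aW)
        = invSq (Y.submatrix (Fin.castAdd aW) (Fin.castAdd bW)) ∧
      (invSq Y).submatrix (Fin.natAdd bT) (Fin.natAdd aT)
        = invSq (Y.submatrix (Fin.natAdd aT) (Fin.natAdd bT)) := by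
  subst hT; subst hW
  rw [invSq_eq, invSq_eq, invSq_eq]
  exact inv_blocks Y hz ((bij_mulVecLin_iff _).mp hTb) ((bij_mulVecLin_iff _).mp hWb)

lemma castMul_cast_map {a b c d a' b' c' d' : ℕ}
    (ha : a = a') (hb : b = b') (hc : c = c') (hd : d = d')
    (X : Matrix (Fin a') (Fin b') (Kp p)) (Y : Matrix (Fin c') (Fin d') (Kp p)) :
    ((castMul X Y).submatrix (⇑(finCongr ha)) (⇑(finCongr hd))).map (frobHom p e)
      = castMul ((X.submatrix (⇑(finCongr ha)) (⇑(finCongr hb))).map (frobHom p e))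
          ((Y.submatrix (⇑(finCongr hc)) (⇑(finCongr hd))).map (frobHom p e)) := by
  subst ha; subst hb; subst hc; subst hd
  simp only [finCongr_refl, Equiv.coe_refl, Matrix.submatrix_id_id]
  exact castMul_map X Y

lemma castMul_invSq_cast_map {a b c d a' b' c' d' : ℕ}
    (ha : a = a') (hb : b = b') (hc : c = c') (hd : d = d')
    (Y : Matrix (Fin a') (Fin b') (Kp p)) (Z : Matrix (Fin c') (Fin d') (Kp p)) :
    ((castMul (invSq Y) Z).submatrix (⇑(finCongr hb)) (⇑(finCongr hd))).map (frobHom p e)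
      = castMul (invSq ((Y.submatrix (⇑(finCongr ha)) (⇑(finCongr hb))).map (frobHom p e)))
          ((Z.submatrix (⇑(finCongr hc)) (⇑(finCongr hd))).map (frobHom p e)) := by
  subst ha; subst hb; subst hc; subst hd
  simp only [finCongr_refl, Equiv.coe_refl, Matrix.submatrix_id_id]
  rw [castMul_map, invSq_map]

end AuxBlock
section AuxComp

lemma comp_castAdd {a b c d : ℕ} (h1 : a = c) (h2 : b = d) (hs : a + b = c + d) :
    (Fin.castAdd d) ∘ ⇑(finCongr h1) = ⇑(finCongr hs) ∘ (Fin.castAdd b) := by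
  subst h1; subst h2; rfl

lemma comp_natAdd {a b c d : ℕ} (h1 : a = c) (h2 : b = d) (hs : a + b = c + d) :
    (Fin.natAdd c) ∘ ⇑(finCongr h2) = ⇑(finCongr hs) ∘ (Fin.natAdd a) := by
  subst h1; subst h2; rfl

lemma dim_eq_of_hk {C : CSetup} (D' : DimVec C.toPreGraph) (hb : DimVec.bal C D')
    {k : C.E} (hk : C.isHK k) : D'.d (C.src k) = D'.d (C.tgt k) := by
  obtain ⟨n, hn⟩ := C.hk_src hk
  obtain ⟨m, hm⟩ := C.hk_tgt hk
  rw [← hn, ← hm, D'.inv_zpow, D'.inv_zpow]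
  exact hb

end AuxComp

/-- In the extended restriction diagram on twisted Frobenius fixed points,
with rows `(E_𝐕^𝐅 ← S_𝐖^𝐅 → E_𝐓^𝐅 × E_𝐖^𝐅)`, its ♥-restriction, and the contracted
version, with upward vertical maps the inclusions `j` and downward vertical maps the
contraction maps `μ`, all four squares commute and the two top squares are Cartesian squares
of sets.  In this ambient model (`S ⊆ E_𝐕`, `κ = (blockT, blockW)`, `j` = inclusions of
subsets):  the maps `κ` and `μ` are compatible with the twisted Frobenii;  the top-left
square is Cartesian, i.e. `S_𝐖^{♥,𝐅} = S_𝐖^𝐅 ∩ E_𝐕^{♥,𝐅}`;  the top-right square is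
Cartesian, i.e. for `x ∈ S_𝐖^𝐅`, `x` is in the heart locus iff `x^𝐓` and `x^𝐖` are;
the bottom-left square commutes, i.e. `μ` maps `S_𝐖^{♥,𝐅}` into `S_𝐖̂^{𝐅̂}`;  and the
bottom-right square commutes, i.e. `κ̂ ∘ μ′_ν = (μ_τ × μ_ω) ∘ κ^♥`. -/
theorem stmt7 (p e : ℕ) [Fact p.Prime] (he : 0 < e) (C : CSetup)
    (Dt Dw : DimVec C.toPreGraph) (hbt : Dt.bal C) (hbw : Dw.bal C) :
    -- `κ` is compatible with the twisted Frobenii (so the top rows are well defined)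
    (∀ x, TwFE p e C.toPreGraph (Dt.add Dw) x = x →
      x ∈ SWSet p C.toPreGraph Dt Dw →
        TwFE p e C.toPreGraph Dt (blockT p C.toPreGraph Dt Dw x)
            = blockT p C.toPreGraph Dt Dw x ∧
        TwFE p e C.toPreGraph Dw (blockW p C.toPreGraph Dt Dw x)
            = blockW p C.toPreGraph Dt Dw x) ∧
    -- top-left square Cartesian:
    -- `S_𝐖^{♥,𝐅}` is the fiber product of `S_𝐖^𝐅` and `E_𝐕^{♥,𝐅}` over `E_𝐕^𝐅`
    ({x | (TwFE p e C.toPreGraph (Dt.add Dw) x = x ∧ x ∈ SWSet p C.toPreGraph Dt Dw) ∧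
        x ∈ heartSet p C (Dt.add Dw)}
      = {x | TwFE p e C.toPreGraph (Dt.add Dw) x = x ∧ x ∈ SWSet p C.toPreGraph Dt Dw}
        ∩ heartF p e C (Dt.add Dw)) ∧
    -- top-right square Cartesian:  `S_𝐖^{♥,𝐅}` is the fiber product of `S_𝐖^𝐅` and
    -- `E_𝐓^{♥,𝐅} × E_𝐖^{♥,𝐅}` over `E_𝐓^𝐅 × E_𝐖^𝐅`
    (∀ x, TwFE p e C.toPreGraph (Dt.add Dw) x = x → x ∈ SWSet p C.toPreGraph Dt Dw →
      (x ∈ heartSet p C (Dt.add Dw) ↔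
        blockT p C.toPreGraph Dt Dw x ∈ heartSet p C Dt ∧
        blockW p C.toPreGraph Dt Dw x ∈ heartSet p C Dw)) ∧
    -- bottom-left square commutes: `μ_ν` restricts to
    -- `μ′_ν : S_𝐖^{♥,𝐅} → S_𝐖̂^{𝐅̂}`
    (∀ x, TwFE p e C.toPreGraph (Dt.add Dw) x = x → x ∈ SWSet p C.toPreGraph Dt Dw →
      x ∈ heartSet p C (Dt.add Dw) →
        muE p C (Dt.add Dw) x ∈ SWSet p C.GHat (Dt.hat C) (Dw.hat C) ∧
        TwFE p e C.GHat ((Dt.add Dw).hat C) (muE p C (Dt.add Dw) x)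
          = muE p C (Dt.add Dw) x) ∧
    -- bottom-right square commutes: `κ̂ (μ′_ν x) = (μ_τ (x^𝐓), μ_ω (x^𝐖))`
    (∀ x, TwFE p e C.toPreGraph (Dt.add Dw) x = x → x ∈ SWSet p C.toPreGraph Dt Dw →
      x ∈ heartSet p C (Dt.add Dw) →
        blockT p C.GHat (Dt.hat C) (Dw.hat C) (muE p C (Dt.add Dw) x)
            = muE p C Dt (blockT p C.toPreGraph Dt Dw x) ∧
        blockW p C.GHat (Dt.hat C) (Dw.hat C) (muE p C (Dt.add Dw) x)
            = muE p C Dw (blockW p C.toPreGraph Dt Dw x)) := by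
  classical
  have hdT : ∀ {k : C.E}, C.isHK k → Dt.d (C.src k) = Dt.d (C.tgt k) :=
    fun hk => dim_eq_of_hk Dt hbt hk
  have hdW : ∀ {k : C.E}, C.isHK k → Dw.d (C.src k) = Dw.d (C.tgt k) :=
    fun hk => dim_eq_of_hk Dw hbw hk
  have key3 : ∀ x, x ∈ SWSet p C.toPreGraph Dt Dw →
      (x ∈ heartSet p C (Dt.add Dw) ↔
        blockT p C.toPreGraph Dt Dw x ∈ heartSet p C Dt ∧
        blockW p C.toPreGraph Dt Dw x ∈ heartSet p C Dw) := by
    intro x hsw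
    constructor
    · intro hh
      constructor
      · intro k hk
        exact ((bij_blocks' (hdT hk) (hdW hk) (x k) (fun i j => hsw k i j)).mp (hh k hk)).1
      · intro k hk
        exact ((bij_blocks' (hdT hk) (hdW hk) (x k) (fun i j => hsw k i j)).mp (hh k hk)).2
    · rintro ⟨h1, h2⟩ k hk
      exact (bij_blocks' (hdT hk) (hdW hk) (x k) (fun i j => hsw k i j)).mpr ⟨h1 k hk, h2 k hk⟩
  refine ⟨?_, ?_, fun x _ hsw => key3 x hsw, ?_, ?_⟩
  -- Part 1 : κ compatible with the Frobenii
  · intro x hx hsw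
    constructor
    · funext h
      rw [TwFE_eq_map C.toPreGraph Dt _ h (dimtgt _ Dt h) (dimsrc _ Dt h)]
      have hB : blockT p C.toPreGraph Dt Dw x (C.aE h)
          = (x (C.aE h)).submatrix (Fin.castAdd (Dw.d (C.tgt (C.aE h))))
              (Fin.castAdd (Dw.d (C.src (C.aE h)))) := rfl
      have hB2 : blockT p C.toPreGraph Dt Dw x h
          = (x h).submatrix (Fin.castAdd (Dw.d (C.tgt h)))
              (Fin.castAdd (Dw.d (C.src h))) := rfl
      rw [hB, hB2, fixed_apply hx h (dimtgt _ (Dt.add Dw) h) (dimsrc _ (Dt.add Dw) h)]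
      rfl
    · funext h
      rw [TwFE_eq_map C.toPreGraph Dw _ h (dimtgt _ Dw h) (dimsrc _ Dw h)]
      have hB : blockW p C.toPreGraph Dt Dw x (C.aE h)
          = (x (C.aE h)).submatrix (Fin.natAdd (Dt.d (C.tgt (C.aE h))))
              (Fin.natAdd (Dt.d (C.src (C.aE h)))) := rfl
      have hB2 : blockW p C.toPreGraph Dt Dw x h
          = (x h).submatrix (Fin.natAdd (Dt.d (C.tgt h)))
              (Fin.natAdd (Dt.d (C.src h))) := rfl
      rw [hB, hB2, fixed_apply hx h (dimtgt _ (Dt.add Dw) h) (dimsrc _ (Dt.add Dw) h)]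
      ext i j
      exact congrArg (frobHom p e) (congrArg₂ (fun a b => x (C.aE h) a b)
        (natAdd_finCongr (dimtgt _ Dt h) (dimtgt _ Dw h) (dimtgt _ (Dt.add Dw) h) i)
        (natAdd_finCongr (dimsrc _ Dt h) (dimsrc _ Dw h) (dimsrc _ (Dt.add Dw) h) j))
  -- Part 2 : top-left square Cartesian
  · ext x
    simp only [Set.mem_setOf_eq, Set.mem_inter_iff, heartF]
    tauto
  -- Part 4 : bottom-left square commutes
  · intro x hx hsw hheart
    have hTW := (key3 x hsw).mp hheart
    constructor
    · intro eh
      obtain ⟨r, pfE⟩ := eh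
      rcases r with h | ⟨k, l⟩ | ⟨k, l⟩
      · intro i j
        exact hsw h i j
      · intro i j
        exact (castMul_block_zero (congrArg Dt.d pfE.2) (congrArg Dw.d pfE.2)
          (x l) (x k) (fun i j => hsw l i j) (fun i j => hsw k i j)).1 i j
      · intro i j
        have hinv := invSq_block (hdT pfE.1) (hdW pfE.1) (x k)
          (fun i j => hsw k i j) (hTW.1 k pfE.1) (hTW.2 k pfE.1)
        exact (castMul_block_zero ((congrArg Dt.d pfE.2.1).symm) ((congrArg Dw.d pfE.2.1).symm)
          (invSq (x k)) (x l) (fun i j => hinv.1 i j) (fun i j => hsw l i j)).1 i j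
    · funext eh
      rw [TwFE_eq_map C.GHat ((Dt.add Dw).hat C) _ eh
        (dimtgt C.GHat ((Dt.add Dw).hat C) eh) (dimsrc C.GHat ((Dt.add Dw).hat C) eh)]
      obtain ⟨r, pfE⟩ := eh
      rcases r with h | ⟨k, l⟩ | ⟨k, l⟩
      · exact (fixed_apply hx h (dimtgt C.toPreGraph (Dt.add Dw) h)
          (dimsrc C.toPreGraph (Dt.add Dw) h)).symm
      · show ((castMul (x (C.aE l)) (x (C.aE k))).submatrix
            (⇑(finCongr (dimtgt C.toPreGraph (Dt.add Dw) l)))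
            (⇑(finCongr (dimsrc C.toPreGraph (Dt.add Dw) k)))).map (frobHom p e)
          = castMul (x l) (x k)
        rw [castMul_cast_map (dimtgt C.toPreGraph (Dt.add Dw) l)
            (dimsrc C.toPreGraph (Dt.add Dw) l) (dimtgt C.toPreGraph (Dt.add Dw) k)
            (dimsrc C.toPreGraph (Dt.add Dw) k) (x (C.aE l)) (x (C.aE k)),
          ← fixed_apply hx l (dimtgt C.toPreGraph (Dt.add Dw) l)
            (dimsrc C.toPreGraph (Dt.add Dw) l),
          ← fixed_apply hx k (dimtgt C.toPreGraph (Dt.add Dw) k)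
            (dimsrc C.toPreGraph (Dt.add Dw) k)]
      · show ((castMul (invSq (x (C.aE k))) (x (C.aE l))).submatrix
            (⇑(finCongr (dimsrc C.toPreGraph (Dt.add Dw) k)))
            (⇑(finCongr (dimsrc C.toPreGraph (Dt.add Dw) l)))).map (frobHom p e)
          = castMul (invSq (x k)) (x l)
        rw [castMul_invSq_cast_map (dimtgt C.toPreGraph (Dt.add Dw) k)
            (dimsrc C.toPreGraph (Dt.add Dw) k) (dimtgt C.toPreGraph (Dt.add Dw) l)
            (dimsrc C.toPreGraph (Dt.add Dw) l) (x (C.aE k)) (x (C.aE l)),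
          ← fixed_apply hx k (dimtgt C.toPreGraph (Dt.add Dw) k)
            (dimsrc C.toPreGraph (Dt.add Dw) k),
          ← fixed_apply hx l (dimtgt C.toPreGraph (Dt.add Dw) l)
            (dimsrc C.toPreGraph (Dt.add Dw) l)]
  -- Part 5 : bottom-right square commutes
  · intro x hx hsw hheart
    have hTW := (key3 x hsw).mp hheart
    constructor
    · funext eh
      obtain ⟨r, pfE⟩ := eh
      rcases r with h | ⟨k, l⟩ | ⟨k, l⟩
      · rfl
      · exact (castMul_block_zero (congrArg Dt.d pfE.2) (congrArg Dw.d pfE.2)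
          (x l) (x k) (fun i j => hsw l i j) (fun i j => hsw k i j)).2.1
      · have hinv := invSq_block (hdT pfE.1) (hdW pfE.1) (x k)
          (fun i j => hsw k i j) (hTW.1 k pfE.1) (hTW.2 k pfE.1)
        have h1 := (castMul_block_zero ((congrArg Dt.d pfE.2.1).symm)
          ((congrArg Dw.d pfE.2.1).symm) (invSq (x k)) (x l)
          (fun i j => hinv.1 i j) (fun i j => hsw l i j)).2.1
        refine h1.trans ?_
        rw [hinv.2.1]
        rfl
    · funext eh
      obtain ⟨r, pfE⟩ := eh
      rcases r with h | ⟨k, l⟩ | ⟨k, l⟩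
      · rfl
      · exact (castMul_block_zero (congrArg Dt.d pfE.2) (congrArg Dw.d pfE.2)
          (x l) (x k) (fun i j => hsw l i j) (fun i j => hsw k i j)).2.2
      · have hinv := invSq_block (hdT pfE.1) (hdW pfE.1) (x k)
          (fun i j => hsw k i j) (hTW.1 k pfE.1) (hTW.2 k pfE.1)
        have h1 := (castMul_block_zero ((congrArg Dt.d pfE.2.1).symm)
          ((congrArg Dw.d pfE.2.1).symm) (invSq (x k)) (x l)
          (fun i j => hinv.1 i j) (fun i j => hsw l i j)).2.2
        refine h1.trans ?_
        rw [hinv.2.2]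
        rfl
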